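/- Let R : H → H be α-averaged for some α ∈ (0,1) with Fix R ≠ ∅. If (β_n) satisfies 0 < β_n ≤ 1, β_n → 1, ∑(1-β_n) = +∞, ∑|β_n - β_{n-1}| < +∞, and (λ_n) satisfies 0 < λ_n ≤ 1/α, liminf λ_n > 0, ∑|λ_n - λ_{n-1}| < +∞, then the sequence x_{n+1} = β_n x_n + λ_n(R(β_n x_n) - β_n x_n) converges strongly to the projection of 0 onto Fix R. -/

import Mathlib

open Filter Topology

/-- `R` is `α`-averaged if `R = (1-α) Id + α T` for some nonexpansive `T`. -/
def IsAveraged {H : Type*} [NormedAddCommGroup H] [InnerProductSpace ℝ H]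
    (α : ℝ) (R : H → H) : Prop :=
  ∃ T : H → H, (∀ x y : H, ‖T x - T y‖ ≤ ‖x - y‖) ∧
    ∀ x : H, R x = (1 - α) • x + α • T x

section AuxiliaryLemmas
open RealInnerProductSpace

lemma xu_prod_tendsto_zero (γ : ℕ → ℝ) (h0 : ∀ n, 0 ≤ γ n) (h1 : ∀ n, γ n ≤ 1)
    (hdiv : ¬ Summable γ) (N : ℕ) :
    Tendsto (fun m => ∏ k ∈ Finset.Ico N m, (1 - γ k)) atTop (𝓝 0) := by
  have hsum : Tendsto (fun m => ∑ i ∈ Finset.range m, γ i) atTop atTop :=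
    (not_summable_iff_tendsto_nat_atTop_of_nonneg h0).1 hdiv
  have hsum2 : Tendsto (fun m => ∑ k ∈ Finset.Ico N m, γ k) atTop atTop := by
    have he : ∀ᶠ m in atTop, ∑ i ∈ Finset.range m, γ i - ∑ i ∈ Finset.range N, γ i
        = ∑ k ∈ Finset.Ico N m, γ k := by
      filter_upwards [eventually_ge_atTop N] with m hm
      rw [Finset.sum_Ico_eq_sub _ hm]
    exact Tendsto.congr' he (hsum.atTop_add tendsto_const_nhds)
  have hub : ∀ m, ∏ k ∈ Finset.Ico N m, (1 - γ k) ≤ Real.exp (-(∑ k ∈ Finset.Ico N m, γ k)) := by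
    intro m
    calc ∏ k ∈ Finset.Ico N m, (1 - γ k) ≤ ∏ k ∈ Finset.Ico N m, Real.exp (-(γ k)) := by
          apply Finset.prod_le_prod
          · intro k _; linarith [h1 k]
          · intro k _; have := Real.add_one_le_exp (-(γ k)); linarith
      _ = Real.exp (∑ k ∈ Finset.Ico N m, -(γ k)) := (Real.exp_sum _ _).symm
      _ = Real.exp (-(∑ k ∈ Finset.Ico N m, γ k)) := by rw [Finset.sum_neg_distrib]
  have hlb : ∀ m, 0 ≤ ∏ k ∈ Finset.Ico N m, (1 - γ k) := fun m =>
    Finset.prod_nonneg (fun k _ => by linarith [h1 k])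
  have hexp : Tendsto (fun m => Real.exp (-(∑ k ∈ Finset.Ico N m, γ k))) atTop (𝓝 0) :=
    Real.tendsto_exp_neg_atTop_nhds_zero.comp hsum2
  exact tendsto_of_tendsto_of_tendsto_of_le_of_le tendsto_const_nhds hexp hlb hub

lemma xu_lemma (s γ δ ε : ℕ → ℝ) (hs : ∀ n, 0 ≤ s n)
    (hγ0 : ∀ n, 0 ≤ γ n) (hγ1 : ∀ n, γ n ≤ 1) (hγdiv : ¬ Summable γ)
    (hδ : ∀ η : ℝ, 0 < η → ∀ᶠ n in atTop, δ n ≤ η)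
    (hε0 : ∀ n, 0 ≤ ε n) (hεsum : Summable ε)
    (hrec : ∀ n, s (n + 1) ≤ (1 - γ n) * s n + γ n * δ n + ε n) :
    Tendsto s atTop (𝓝 0) := by
  have key : ∀ η : ℝ, 0 < η → ∀ᶠ n in atTop, s n < η := by
    intro η hη
    have hη4 : 0 < η / 4 := by linarith
    have htail : Tendsto (fun N => ∑' k, ε (k + N)) atTop (𝓝 0) := tendsto_sum_nat_add ε
    have h1 : ∀ᶠ N in atTop, (∑' k, ε (k + N)) < η / 4 :=
      (htail.eventually (eventually_lt_nhds hη4))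
    obtain ⟨N, hN⟩ := eventually_atTop.1 ((hδ (η/4) hη4).and h1)
    have hNδ : ∀ m, N ≤ m → δ m ≤ η/4 := fun m hm => (hN m hm).1
    have hNtail : (∑' k, ε (k + N)) < η/4 := (hN N le_rfl).2
    -- main induction
    have hεt : Summable (fun k => ε (k + N)) := (summable_nat_add_iff N).2 hεsum
    have hEbound : ∀ m, ∑ k ∈ Finset.Ico N m, ε k ≤ ∑' k, ε (k + N) := by
      intro m
      rw [Finset.sum_Ico_eq_sum_range]
      calc ∑ i ∈ Finset.range (m - N), ε (N + i)
          = ∑ i ∈ Finset.range (m - N), ε (i + N) := by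
            apply Finset.sum_congr rfl; intro i _; rw [Nat.add_comm]
        _ ≤ ∑' k, ε (k + N) := Summable.sum_le_tsum _ (fun i _ => hε0 _) hεt
    have hEnonneg : ∀ m, 0 ≤ ∑ k ∈ Finset.Ico N m, ε k :=
      fun m => Finset.sum_nonneg (fun k _ => hε0 k)
    have claim : ∀ m, N ≤ m → s m ≤ (∏ k ∈ Finset.Ico N m, (1 - γ k)) * s N
        + (1 - ∏ k ∈ Finset.Ico N m, (1 - γ k)) * (η/4) + ∑ k ∈ Finset.Ico N m, ε k := by
      intro m hm
      induction m with
      | zero =>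
        have : N = 0 := Nat.le_zero.mp hm
        subst this; simp
      | succ m ih =>
        rcases Nat.lt_or_ge N (m+1) with hlt | hge
        · have hm' : N ≤ m := Nat.lt_succ_iff.mp hlt
          have ihm := ih hm'
          have hprodrec : ∏ k ∈ Finset.Ico N (m+1), (1 - γ k)
              = (∏ k ∈ Finset.Ico N m, (1 - γ k)) * (1 - γ m) :=
            Finset.prod_Ico_succ_top hm' _
          have hsumrec : ∑ k ∈ Finset.Ico N (m+1), ε k
              = (∑ k ∈ Finset.Ico N m, ε k) + ε m := Finset.sum_Ico_succ_top hm' _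
          have hδm : δ m ≤ η/4 := hNδ m hm'
          have hP0 : 0 ≤ ∏ k ∈ Finset.Ico N m, (1 - γ k) :=
            Finset.prod_nonneg (fun k _ => by linarith [hγ1 k])
          have hrecm := hrec m
          have h1γ : 0 ≤ 1 - γ m := by linarith [hγ1 m]
          have step1 : s (m+1) ≤ (1 - γ m) * ((∏ k ∈ Finset.Ico N m, (1 - γ k)) * s N
              + (1 - ∏ k ∈ Finset.Ico N m, (1 - γ k)) * (η/4) + ∑ k ∈ Finset.Ico N m, ε k)
              + γ m * (η/4) + ε m := by
            have hγδ : γ m * δ m ≤ γ m * (η/4) := mul_le_mul_of_nonneg_left hδm (hγ0 m)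
            have := mul_le_mul_of_nonneg_left ihm h1γ
            linarith
          rw [hprodrec, hsumrec]
          have hEm := hEnonneg m
          nlinarith [hε0 m, hγ0 m, hγ1 m]
        · have : N = m + 1 := le_antisymm hm hge
          subst this; simp
    -- product tends to 0
    have hprod := xu_prod_tendsto_zero γ hγ0 hγ1 hγdiv N
    have hPsmall : ∀ᶠ m in atTop, (∏ k ∈ Finset.Ico N m, (1 - γ k)) * s N < η / 4 := by
      have : Tendsto (fun m => (∏ k ∈ Finset.Ico N m, (1 - γ k)) * s N) atTop (𝓝 (0 * s N)) :=
        hprod.mul_const _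
      rw [zero_mul] at this
      exact this.eventually (eventually_lt_nhds hη4)
    filter_upwards [hPsmall, eventually_ge_atTop N] with m h1 h2
    have hcl := claim m h2
    have hP0 : 0 ≤ ∏ k ∈ Finset.Ico N m, (1 - γ k) :=
      Finset.prod_nonneg (fun k _ => by linarith [hγ1 k])
    have hP1 : ∏ k ∈ Finset.Ico N m, (1 - γ k) ≤ 1 :=
      Finset.prod_le_one (fun k _ => by linarith [hγ1 k]) (fun k _ => by linarith [hγ0 k]) |>.trans_eq rfl
    have hE := hEbound m
    have := hNtail
    nlinarith
  rw [tendsto_order]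
  constructor
  · intro a ha
    filter_upwards with n; exact lt_of_lt_of_le ha (hs n)
  · intro a ha
    exact key a ha


variable {H : Type*} [NormedAddCommGroup H] [InnerProductSpace ℝ H]

lemma segment_identity (v z w : H) (t : ℝ) :
    ‖v - (z + t • (w - z))‖^2
      = (1-t)*‖v - z‖^2 + t*‖v - w‖^2 - t*(1-t)*‖z - w‖^2 := by
  have h1 : v - (z + t • (w - z)) = (v - z) - t • (w - z) := by abel
  have h2 : v - w = (v - z) - (w - z) := by abel
  have h3 : ‖z - w‖ = ‖w - z‖ := norm_sub_rev _ _
  rw [h1, h2, h3, norm_sub_sq_real (v - z) (t • (w - z)), norm_sub_sq_real (v - z) (w - z),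
    real_inner_smul_right, norm_smul, Real.norm_eq_abs, mul_pow, sq_abs]
  ring

lemma fix_segment (T : H → H) (hT : ∀ x y, ‖T x - T y‖ ≤ ‖x - y‖)
    (z w : H) (hz : T z = z) (hw : T w = w) (t : ℝ) (ht0 : 0 ≤ t) (ht1 : t ≤ 1) :
    T (z + t • (w - z)) = z + t • (w - z) := by
  set m := z + t • (w - z) with hm
  have hmz : m - z = t • (w - z) := by rw [hm]; abel
  have hmw : m - w = (t - 1) • (w - z) := by
    rw [hm, sub_smul, one_smul]; abel
  have hmz2 : ‖m - z‖^2 = t^2 * ‖w - z‖^2 := by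
    rw [hmz, norm_smul, Real.norm_eq_abs, mul_pow, sq_abs]
  have hmw2 : ‖m - w‖^2 = (1-t)^2 * ‖w - z‖^2 := by
    rw [hmw, norm_smul, Real.norm_eq_abs, mul_pow, sq_abs]
    have h : (t-1)^2 = (1-t)^2 := by ring
    rw [h]
  have hz' : ‖T m - z‖^2 ≤ ‖m - z‖^2 := by
    have h := hT m z; rw [hz] at h
    exact pow_le_pow_left₀ (norm_nonneg _) h 2
  have hw' : ‖T m - w‖^2 ≤ ‖m - w‖^2 := by
    have h := hT m w; rw [hw] at h
    exact pow_le_pow_left₀ (norm_nonneg _) h 2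
  have hid := segment_identity (T m) z w t
  have hzw : ‖z - w‖^2 = ‖w - z‖^2 := by rw [norm_sub_rev]
  have hsq : ‖T m - m‖^2 ≤ 0 := by
    rw [hid, hzw]
    nlinarith [hz', hw', hmz2, hmw2]
  have hn0 : ‖T m - m‖ ≤ 0 := by nlinarith [norm_nonneg (T m - m)]
  exact sub_eq_zero.mp (norm_le_zero_iff.mp hn0)

lemma min_norm_var_ineq (T : H → H) (hT : ∀ x y, ‖T x - T y‖ ≤ ‖x - y‖)
    (p : H) (hp : T p = p) (hmin : ∀ q, T q = q → ‖p‖ ≤ ‖q‖)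
    (z : H) (hz : T z = z) : ⟪-p, z - p⟫ ≤ 0 := by
  have key : ∀ t : ℝ, 0 < t → t ≤ 1 → 0 ≤ 2*⟪p, z - p⟫ + t*‖z-p‖^2 := by
    intro t ht0 ht1
    have hfix := fix_segment T hT p z hp hz t (le_of_lt ht0) ht1
    have hmle := hmin _ hfix
    have hsq : ‖p‖^2 ≤ ‖p + t • (z - p)‖^2 := pow_le_pow_left₀ (norm_nonneg _) hmle 2
    have hexp : ‖p + t • (z - p)‖^2 = ‖p‖^2 + 2*t*⟪p, z-p⟫ + t^2*‖z-p‖^2 := by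
      rw [norm_add_sq_real, real_inner_smul_right, norm_smul, Real.norm_eq_abs, mul_pow, sq_abs]
      ring
    rw [hexp] at hsq
    nlinarith
  rw [inner_neg_left]
  by_contra hcon
  push_neg at hcon
  have hipneg : ⟪p, z - p⟫ < 0 := by linarith
  rcases eq_or_lt_of_le (sq_nonneg ‖z - p‖) with hD | hD
  · have := key 1 one_pos le_rfl
    nlinarith
  · set D := ‖z - p‖^2 with hDdef
    have ht0 : 0 < min 1 (-⟪p, z - p⟫ / D) := by
      apply lt_min one_pos
      apply div_pos (by linarith) hD
    have hk := key _ ht0 (min_le_left _ _)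
    have hle : min 1 (-⟪p, z - p⟫ / D) * D ≤ (-⟪p, z - p⟫ / D) * D :=
      mul_le_mul_of_nonneg_right (min_le_right _ _) (le_of_lt hD)
    rw [div_mul_cancel₀ _ (ne_of_gt hD)] at hle
    nlinarith


lemma eventually_inner_lt [CompleteSpace H]
    (T : H → H) (hT : ∀ a b, ‖T a - T b‖ ≤ ‖a - b‖)
    (p : H) (hp : T p = p) (hmin : ∀ q, T q = q → ‖p‖ ≤ ‖q‖)
    (u : ℕ → H) (M : ℝ) (hbdd : ∀ n, ‖u n‖ ≤ M)
    (hreg : Tendsto (fun n => ‖T (u n) - u n‖) atTop (𝓝 0))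
    (η : ℝ) (hη : 0 < η) :
    ∀ᶠ n in atTop, ⟪-p, u n - p⟫ < η := by
  by_contra hcon
  rw [Filter.not_eventually] at hcon
  set S : Set ℕ := {n | η ≤ ⟪-p, u n - p⟫} with hS
  have hfreq : ∃ᶠ n in atTop, n ∈ S := hcon.mono (fun n hn => not_lt.mp hn)
  have hFne : (atTop ⊓ 𝓟 S).NeBot := Filter.frequently_mem_iff_neBot.mp hfreq
  set U : Ultrafilter ℕ := Ultrafilter.of (atTop ⊓ 𝓟 S) with hUdef
  have hUle : ↑U ≤ atTop ⊓ 𝓟 S := Ultrafilter.of_le _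
  have hUatTop : (U : Filter ℕ) ≤ atTop := hUle.trans inf_le_left
  have hUS : (U : Filter ℕ) ≤ 𝓟 S := hUle.trans inf_le_right
  have hM0 : 0 ≤ M := le_trans (norm_nonneg _) (hbdd 0)
  -- construct weak limit via ultrafilter limits and Riesz representation
  have hex : ∀ y : H, ∃ a : ℝ, Tendsto (fun n => ⟪u n, y⟫) (U : Filter ℕ) (𝓝 a) := by
    intro y
    have hmem : ∀ n, ⟪u n, y⟫ ∈ Set.Icc (-(M*‖y‖)) (M*‖y‖) := by
      intro n
      have habs : |⟪u n, y⟫| ≤ M * ‖y‖ :=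
        le_trans (abs_real_inner_le_norm _ _)
          (mul_le_mul_of_nonneg_right (hbdd n) (norm_nonneg _))
      exact ⟨neg_le_of_abs_le habs, le_of_abs_le habs⟩
    have hle : ↑(U.map (fun n => ⟪u n, y⟫)) ≤ 𝓟 (Set.Icc (-(M*‖y‖)) (M*‖y‖)) := by
      rw [le_principal_iff]
      exact Filter.mem_map.2 (Filter.Eventually.of_forall hmem)
    obtain ⟨a, _, ha⟩ := isCompact_Icc.ultrafilter_le_nhds (U.map (fun n => ⟪u n, y⟫)) hle
    exact ⟨a, ha⟩
  choose φ hφ using hex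
  have hadd : ∀ y1 y2 : H, φ (y1 + y2) = φ y1 + φ y2 := by
    intro y1 y2
    refine tendsto_nhds_unique (hφ (y1 + y2)) ?_
    have := (hφ y1).add (hφ y2)
    simpa [inner_add_right] using this
  have hsmul : ∀ (c : ℝ) (y : H), φ (c • y) = c * φ y := by
    intro c y
    refine tendsto_nhds_unique (hφ (c • y)) ?_
    have := (hφ y).const_mul c
    simpa [real_inner_smul_right, mul_comm] using this
  have hbound : ∀ y : H, |φ y| ≤ M * ‖y‖ := by
    intro y
    have habs : Tendsto (fun n => |⟪u n, y⟫|) (U : Filter ℕ) (𝓝 |φ y|) := (hφ y).abs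
    refine le_of_tendsto habs (Filter.Eventually.of_forall fun n => ?_)
    exact le_trans (abs_real_inner_le_norm _ _)
      (mul_le_mul_of_nonneg_right (hbdd n) (norm_nonneg _))
  let φl : H →ₗ[ℝ] ℝ :=
    { toFun := φ
      map_add' := hadd
      map_smul' := hsmul }
  let φc : H →L[ℝ] ℝ := LinearMap.mkContinuous φl M (fun y => by
    rw [Real.norm_eq_abs]; exact hbound y)
  set z : H := (InnerProductSpace.toDual ℝ H).symm φc with hzdef
  have hz : ∀ y : H, ⟪z, y⟫ = φ y := by
    intro y
    exact InnerProductSpace.toDual_symm_apply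
  have hzten : ∀ y : H, Tendsto (fun n => ⟪u n, y⟫) (U : Filter ℕ) (𝓝 ⟪z, y⟫) := by
    intro y; rw [hz]; exact hφ y
  -- demiclosedness: T z = z
  have hTz : T z = z := by
    set w := T z with hw
    set r : ℕ → ℝ := fun n => ‖T (u n) - u n‖ with hr
    have hA : ∀ n, 2*⟪u n, z - w⟫ + ‖w‖^2 - ‖z‖^2 = ‖u n - w‖^2 - ‖u n - z‖^2 := by
      intro n
      rw [norm_sub_sq_real, norm_sub_sq_real, inner_sub_right]
      ring
    have hB : ∀ n, ‖u n - w‖^2 - ‖u n - z‖^2 ≤ r n^2 + 2*(r n)*(M + ‖z‖) := by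
      intro n
      have h1 : ‖u n - w‖ ≤ r n + ‖u n - z‖ := by
        calc ‖u n - w‖ ≤ ‖u n - T (u n)‖ + ‖T (u n) - w‖ := norm_sub_le_norm_sub_add_norm_sub _ _ _
          _ ≤ ‖T (u n) - u n‖ + ‖u n - z‖ := by
              rw [norm_sub_rev]
              exact add_le_add le_rfl (hT _ _)
          _ = r n + ‖u n - z‖ := rfl
      have h2 : ‖u n - z‖ ≤ M + ‖z‖ := le_trans (norm_sub_le _ _) (add_le_add (hbdd n) le_rfl)
      have h3 : ‖u n - w‖^2 ≤ (r n + ‖u n - z‖)^2 :=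
        pow_le_pow_left₀ (norm_nonneg _) h1 2
      have hr0 : 0 ≤ r n := norm_nonneg _
      nlinarith [norm_nonneg (u n - z)]
    have hLten : Tendsto (fun n => 2*⟪u n, z - w⟫ + ‖w‖^2 - ‖z‖^2) (U : Filter ℕ)
        (𝓝 (2*⟪z, z - w⟫ + ‖w‖^2 - ‖z‖^2)) := by
      have h1 := (hzten (z - w)).const_mul 2
      exact (h1.add_const (‖w‖^2)).sub_const (‖z‖^2)
    have heten : Tendsto (fun n => r n^2 + 2*(r n)*(M + ‖z‖)) (U : Filter ℕ) (𝓝 0) := by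
      have hre : Tendsto r (U : Filter ℕ) (𝓝 0) := hreg.mono_left hUatTop
      have := ((hre.pow 2).add ((hre.const_mul 2).mul_const (M + ‖z‖)))
      simpa using this.congr (fun n => by ring)
    have hle : 2*⟪z, z - w⟫ + ‖w‖^2 - ‖z‖^2 ≤ 0 := by
      refine le_of_tendsto_of_tendsto' hLten heten (fun n => ?_)
      rw [hA n]; exact hB n
    have hzw : ‖z - w‖^2 ≤ 0 := by
      have hexp : ‖z - w‖^2 = 2*⟪z, z - w⟫ + ‖w‖^2 - ‖z‖^2 := by
        rw [norm_sub_sq_real, inner_sub_right, real_inner_self_eq_norm_sq]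
        ring
      rw [hexp]; exact hle
    have hn0 : ‖z - w‖ ≤ 0 := by nlinarith [norm_nonneg (z - w)]
    exact (sub_eq_zero.mp (norm_le_zero_iff.mp hn0)).symm
  -- contradiction with variational inequality
  have hvar : ⟪-p, z - p⟫ ≤ 0 := min_norm_var_ineq T hT p hp hmin z hTz
  have hften : Tendsto (fun n => ⟪-p, u n - p⟫) (U : Filter ℕ) (𝓝 ⟪-p, z - p⟫) := by
    have h1 := (hzten (-p)).sub (tendsto_const_nhds (x := ⟪p, -p⟫))
    have he : (fun n => ⟪u n, -p⟫ - ⟪p, -p⟫) = fun n => ⟪-p, u n - p⟫ := by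
      funext n
      rw [← inner_sub_left, real_inner_comm]
    rw [he] at h1
    have he2 : ⟪z, -p⟫ - ⟪p, -p⟫ = ⟪-p, z - p⟫ := by
      rw [← inner_sub_left, real_inner_comm]
    rw [he2] at h1
    exact h1
  have hgeη : η ≤ ⟪-p, z - p⟫ := by
    have hSmem : S ∈ (U : Filter ℕ) := le_principal_iff.mp hUS
    refine ge_of_tendsto hften ?_
    filter_upwards [hSmem] with n hn
    exact hn
  linarith

variable {H : Type*} [NormedAddCommGroup H] [InnerProductSpace ℝ H]

set_option maxHeartbeats 1000000 in
theorem KM_core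
    {H : Type*} [NormedAddCommGroup H] [InnerProductSpace ℝ H] [CompleteSpace H]
    (α : ℝ) (hα : α ∈ Set.Ioo (0 : ℝ) 1)
    (T : H → H) (hT : ∀ x y : H, ‖T x - T y‖ ≤ ‖x - y‖)
    (β lam : ℕ → ℝ)
    (hβ : ∀ n, 0 < β n ∧ β n ≤ 1)
    (hβlim : Tendsto β atTop (nhds 1))
    (hβdiv : ¬ Summable (fun n => 1 - β n))
    (hβvar : Summable (fun n => |β (n + 1) - β n|))
    (hlam : ∀ n, 0 < lam n ∧ lam n ≤ 1 / α)
    (hlaminf : 0 < Filter.liminf lam Filter.atTop)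
    (hlamvar : Summable (fun n => |lam (n + 1) - lam n|))
    (x : ℕ → H)
    (hx1 : ∀ n, x (n + 1) = (1 - α * lam n) • (β n • x n) + (α * lam n) • T (β n • x n))
    (p : H) (hTp : T p = p) (hTmin : ∀ q : H, T q = q → ‖p‖ ≤ ‖q‖) :
    Tendsto x atTop (nhds p) := by
  obtain ⟨hα0, hα1⟩ := hα
  set y : ℕ → H := fun n => β n • x n with hy
  have ha0 : ∀ n, 0 < α * lam n := fun n => mul_pos hα0 (hlam n).1
  have ha1 : ∀ n, α * lam n ≤ 1 := by
    intro n
    have h := mul_le_mul_of_nonneg_left (hlam n).2 hα0.le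
    rwa [mul_one_div_cancel (ne_of_gt hα0)] at h
  -- nonexpansiveness of relaxed maps
  have hV : ∀ b : ℝ, 0 ≤ b → b ≤ 1 → ∀ u v : H,
      ‖((1-b) • u + b • T u) - ((1-b) • v + b • T v)‖ ≤ ‖u - v‖ := by
    intro b hb0 hb1 u v
    have h1 : ((1-b) • u + b • T u) - ((1-b) • v + b • T v)
        = (1-b) • (u - v) + b • (T u - T v) := by module
    rw [h1]
    calc ‖(1-b) • (u - v) + b • (T u - T v)‖
        ≤ ‖(1-b) • (u - v)‖ + ‖b • (T u - T v)‖ := norm_add_le _ _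
      _ = (1-b)*‖u - v‖ + b*‖T u - T v‖ := by
          rw [norm_smul, norm_smul, Real.norm_eq_abs, Real.norm_eq_abs,
            abs_of_nonneg hb0, abs_of_nonneg (by linarith : (0:ℝ) ≤ 1 - b)]
      _ ≤ (1-b)*‖u - v‖ + b*‖u - v‖ :=
          add_le_add le_rfl (mul_le_mul_of_nonneg_left (hT u v) hb0)
      _ = ‖u - v‖ := by ring
  -- basic contraction estimates
  have hxy : ∀ n, ‖x (n+1) - p‖ ≤ ‖y n - p‖ := by
    intro n
    have h2 := hV (α * lam n) (ha0 n).le (ha1 n) (y n) p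
    rw [hTp] at h2
    have hpc : (1 - α * lam n) • p + (α * lam n) • p = p := by module
    rw [hpc] at h2
    rw [hx1 n]
    exact h2
  have hyp : ∀ n, ‖y n - p‖ ≤ β n * ‖x n - p‖ + (1 - β n) * ‖p‖ := by
    intro n
    have h1 : y n - p = β n • (x n - p) - (1 - β n) • p := by
      simp only [hy]; module
    rw [h1]
    calc ‖β n • (x n - p) - (1 - β n) • p‖
        ≤ ‖β n • (x n - p)‖ + ‖(1 - β n) • p‖ := norm_sub_le _ _
      _ = β n * ‖x n - p‖ + (1 - β n) * ‖p‖ := by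
          rw [norm_smul, norm_smul, Real.norm_eq_abs, Real.norm_eq_abs,
            abs_of_nonneg (hβ n).1.le, abs_of_nonneg (by linarith [(hβ n).2] : (0:ℝ) ≤ 1 - β n)]
  -- boundedness
  set K : ℝ := max ‖x 0 - p‖ ‖p‖ with hK
  have hKp : ‖p‖ ≤ K := le_max_right _ _
  have hK0 : 0 ≤ K := le_trans (norm_nonneg _) hKp
  have hxpb : ∀ n, ‖x n - p‖ ≤ K := by
    intro n
    induction n with
    | zero => exact le_max_left _ _
    | succ n ih =>
      have h1 := hxy n
      have h2 := hyp n
      have hb := hβ n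
      nlinarith [norm_nonneg (x n - p)]
  have hypb : ∀ n, ‖y n - p‖ ≤ K := by
    intro n
    have h2 := hyp n
    have hb := hβ n
    nlinarith [hxpb n]
  have hxb : ∀ n, ‖x n‖ ≤ K + ‖p‖ := by
    intro n
    calc ‖x n‖ = ‖(x n - p) + p‖ := by rw [sub_add_cancel]
      _ ≤ ‖x n - p‖ + ‖p‖ := norm_add_le _ _
      _ ≤ K + ‖p‖ := add_le_add (hxpb n) le_rfl
  have hTyb : ∀ n, ‖T (y n) - y n‖ ≤ 2*K := by
    intro n
    calc ‖T (y n) - y n‖ ≤ ‖T (y n) - p‖ + ‖p - y n‖ := norm_sub_le_norm_sub_add_norm_sub _ _ _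
      _ = ‖T (y n) - T p‖ + ‖y n - p‖ := by rw [hTp, norm_sub_rev (y n) p]
      _ ≤ ‖y n - p‖ + ‖y n - p‖ := add_le_add (hT _ _) le_rfl
      _ ≤ 2*K := by linarith [hypb n]
  -- asymptotic regularity via Xu's lemma
  set s1 : ℕ → ℝ := fun n => ‖x (n+1) - x n‖ with hs1def
  have hrec1 : ∀ n, s1 (n+1) ≤ (1 - (1 - β (n+1))) * s1 n + (1 - β (n+1)) * 0
      + ((K + ‖p‖) * |β (n+1) - β n| + 2*K*(α * |lam (n+1) - lam n|)) := by
    intro n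
    have hmid : x (n+2) - x (n+1)
        = (((1 - α * lam (n+1)) • (y (n+1)) + (α * lam (n+1)) • T (y (n+1)))
            - ((1 - α * lam (n+1)) • (y n) + (α * lam (n+1)) • T (y n)))
          + ((α * lam (n+1) - α * lam n) • (T (y n) - y n)) := by
      simp only [hy]
      rw [hx1 (n+1), hx1 n]
      module
    have h1 : ‖x (n+2) - x (n+1)‖
        ≤ ‖y (n+1) - y n‖ + |α * lam (n+1) - α * lam n| * ‖T (y n) - y n‖ := by
      rw [hmid]
      calc _ ≤ ‖((1 - α * lam (n+1)) • (y (n+1)) + (α * lam (n+1)) • T (y (n+1)))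
            - ((1 - α * lam (n+1)) • (y n) + (α * lam (n+1)) • T (y n))‖
            + ‖(α * lam (n+1) - α * lam n) • (T (y n) - y n)‖ := norm_add_le _ _
        _ ≤ ‖y (n+1) - y n‖ + |α * lam (n+1) - α * lam n| * ‖T (y n) - y n‖ := by
            refine add_le_add (hV _ (ha0 (n+1)).le (ha1 (n+1)) _ _) ?_
            rw [norm_smul, Real.norm_eq_abs]
    have h2 : ‖y (n+1) - y n‖ ≤ β (n+1) * ‖x (n+1) - x n‖ + |β (n+1) - β n| * ‖x n‖ := by
      have he : y (n+1) - y n = β (n+1) • (x (n+1) - x n) + (β (n+1) - β n) • x n := by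
        simp only [hy]; module
      rw [he]
      calc _ ≤ ‖β (n+1) • (x (n+1) - x n)‖ + ‖(β (n+1) - β n) • x n‖ := norm_add_le _ _
        _ = β (n+1) * ‖x (n+1) - x n‖ + |β (n+1) - β n| * ‖x n‖ := by
            rw [norm_smul, norm_smul, Real.norm_eq_abs, Real.norm_eq_abs,
              abs_of_nonneg (hβ (n+1)).1.le]
    have h3 : |α * lam (n+1) - α * lam n| * ‖T (y n) - y n‖
        ≤ 2*K*(α * |lam (n+1) - lam n|) := by
      have he : |α * lam (n+1) - α * lam n| = α * |lam (n+1) - lam n| := by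
        rw [← mul_sub, abs_mul, abs_of_pos hα0]
      rw [he]
      have := hTyb n
      have h4 : 0 ≤ α * |lam (n+1) - lam n| := by positivity
      nlinarith
    have h5 : |β (n+1) - β n| * ‖x n‖ ≤ (K + ‖p‖) * |β (n+1) - β n| := by
      have := hxb n
      have h6 : 0 ≤ |β (n+1) - β n| := abs_nonneg _
      nlinarith
    simp only [hs1def]
    have : ‖x (n+1+1) - x (n+1)‖ = ‖x (n+2) - x (n+1)‖ := by norm_num
    rw [this]
    calc ‖x (n+2) - x (n+1)‖ ≤ β (n+1) * ‖x (n+1) - x n‖ + |β (n+1) - β n| * ‖x n‖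
          + |α * lam (n+1) - α * lam n| * ‖T (y n) - y n‖ := by linarith
      _ ≤ (1 - (1 - β (n+1))) * ‖x (n+1) - x n‖ + (1 - β (n+1)) * 0
          + ((K + ‖p‖) * |β (n+1) - β n| + 2*K*(α * |lam (n+1) - lam n|)) := by
            have h7 : (1 - (1 - β (n+1))) = β (n+1) := by ring
            rw [h7]
            linarith
  have hs1 : Tendsto s1 atTop (𝓝 0) := by
    refine xu_lemma s1 (fun n => 1 - β (n+1)) (fun _ => 0)
      (fun n => (K + ‖p‖) * |β (n+1) - β n| + 2*K*(α * |lam (n+1) - lam n|))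
      (fun n => norm_nonneg _)
      (fun n => by show (0:ℝ) ≤ 1 - β (n+1); linarith [(hβ (n+1)).2])
      (fun n => by show 1 - β (n+1) ≤ 1; linarith [(hβ (n+1)).1]) ?_ ?_ ?_ ?_ hrec1
    · intro h
      exact hβdiv ((summable_nat_add_iff 1).1 h)
    · intro η hη
      filter_upwards with n; linarith
    · intro n; positivity
    · apply Summable.add
      · exact (hβvar.mul_left _)
      · have := (hlamvar.mul_left α).mul_left (2*K)
        simpa [mul_assoc] using this
  -- eventual lower bound on α * lam n
  have hlb : ∀ᶠ n in atTop, liminf lam atTop / 2 < lam n := by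
    refine Filter.eventually_lt_of_lt_liminf (by linarith) ?_
    exact Filter.isBoundedUnder_of ⟨0, fun n => (hlam n).1.le⟩
  have ha₀pos : 0 < α * (liminf lam atTop / 2) := mul_pos hα0 (by linarith)
  have halb : ∀ᶠ n in atTop, α * (liminf lam atTop / 2) ≤ α * lam n := by
    filter_upwards [hlb] with n hn
    exact mul_le_mul_of_nonneg_left hn.le hα0.le
  have hxyn : ∀ n, ‖x n - y n‖ = (1 - β n) * ‖x n‖ := by
    intro n
    have he : x n - y n = (1 - β n) • x n := by simp only [hy]; module
    rw [he, norm_smul, Real.norm_eq_abs, abs_of_nonneg (by linarith [(hβ n).2] : (0:ℝ) ≤ 1 - β n)]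
  have h1β : Tendsto (fun n => 1 - β n) atTop (𝓝 0) := by
    have h := (tendsto_const_nhds (x := (1:ℝ)) (f := atTop (α := ℕ))).sub hβlim
    simpa using h
  -- ‖T (y n) - y n‖ → 0
  have hTy0 : Tendsto (fun n => ‖T (y n) - y n‖) atTop (𝓝 0) := by
    have hbound : ∀ᶠ n in atTop,
        ‖T (y n) - y n‖ ≤ (s1 n + (1 - β n) * (K + ‖p‖)) / (α * (liminf lam atTop / 2)) := by
      filter_upwards [halb] with n hn
      have he : (α * lam n) • (T (y n) - y n) = x (n+1) - y n := by
        simp only [hy]; rw [hx1 n]; module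
      have hnorm : (α * lam n) * ‖T (y n) - y n‖ = ‖x (n+1) - y n‖ := by
        rw [← he, norm_smul, Real.norm_eq_abs, abs_of_pos (ha0 n)]
      have h2 : ‖x (n+1) - y n‖ ≤ s1 n + (1 - β n) * (K + ‖p‖) := by
        calc ‖x (n+1) - y n‖ ≤ ‖x (n+1) - x n‖ + ‖x n - y n‖ :=
              norm_sub_le_norm_sub_add_norm_sub _ _ _
          _ ≤ s1 n + (1 - β n) * (K + ‖p‖) := by
              rw [hxyn n]
              have h1b : (0:ℝ) ≤ 1 - β n := by linarith [(hβ n).2]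
              have h5 := mul_le_mul_of_nonneg_left (hxb n) h1b
              simp only [hs1def]
              linarith
      rw [le_div_iff₀ ha₀pos]
      calc ‖T (y n) - y n‖ * (α * (liminf lam atTop / 2)) ≤ (α * lam n) * ‖T (y n) - y n‖ := by
            nlinarith [norm_nonneg (T (y n) - y n)]
        _ = ‖x (n+1) - y n‖ := hnorm
        _ ≤ _ := h2
    have hrhs : Tendsto (fun n => (s1 n + (1 - β n) * (K + ‖p‖)) / (α * (liminf lam atTop / 2)))
        atTop (𝓝 0) := by
      have h := (hs1.add (h1β.mul_const (K + ‖p‖))).div_const (α * (liminf lam atTop / 2))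
      simpa using h
    exact squeeze_zero' (Filter.Eventually.of_forall fun n => norm_nonneg _) hbound hrhs
  -- ‖T (x n) - x n‖ → 0
  have hTx0 : Tendsto (fun n => ‖T (x n) - x n‖) atTop (𝓝 0) := by
    have hbound : ∀ n, ‖T (x n) - x n‖ ≤ 2 * ((1 - β n) * (K + ‖p‖)) + ‖T (y n) - y n‖ := by
      intro n
      have h1 : ‖T (x n) - x n‖ ≤ ‖T (x n) - y n‖ + ‖y n - x n‖ :=
        norm_sub_le_norm_sub_add_norm_sub _ _ _
      have h1' : ‖T (x n) - y n‖ ≤ ‖T (x n) - T (y n)‖ + ‖T (y n) - y n‖ :=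
        norm_sub_le_norm_sub_add_norm_sub _ _ _
      have h2 : ‖T (x n) - T (y n)‖ ≤ ‖x n - y n‖ := hT _ _
      have h3 : ‖y n - x n‖ = ‖x n - y n‖ := norm_sub_rev _ _
      have h4 : ‖x n - y n‖ ≤ (1 - β n) * (K + ‖p‖) := by
        rw [hxyn n]
        exact mul_le_mul_of_nonneg_left (hxb n) (by linarith [(hβ n).2] : (0:ℝ) ≤ 1 - β n)
      linarith
    have hrhs : Tendsto (fun n => 2 * ((1 - β n) * (K + ‖p‖)) + ‖T (y n) - y n‖) atTop (𝓝 0) := by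
      have h := ((h1β.mul_const (K + ‖p‖)).const_mul 2).add hTy0
      simpa using h
    exact squeeze_zero' (Filter.Eventually.of_forall fun n => norm_nonneg _)
      (Filter.Eventually.of_forall hbound) hrhs
  -- limsup property
  have hkey : ∀ η : ℝ, 0 < η → ∀ᶠ n in atTop, ⟪-p, x n - p⟫ < η :=
    eventually_inner_lt T hT p hTp hTmin x (K + ‖p‖) hxb hTx0
  -- final Xu application
  set f : ℕ → ℝ := fun n => ⟪-p, x n - p⟫ with hfdef
  set s2 : ℕ → ℝ := fun n => ‖x n - p‖^2 with hs2def
  have hrec2 : ∀ n, s2 (n+1) ≤ (1 - (1 - β n^2)) * s2 n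
      + (1 - β n^2) * ((2*β n*f n + (1-β n)*‖p‖^2)/(1+β n)) + 0 := by
    intro n
    have hb := hβ n
    have hyexp : ‖y n - p‖^2 = β n^2 * s2 n + 2*β n*(1-β n)*(f n) + (1-β n)^2*‖p‖^2 := by
      have he : y n - p = β n • (x n - p) - (1 - β n) • p := by simp only [hy]; module
      have hfe : f n = -⟪x n - p, p⟫ := by
        simp only [hfdef]; rw [inner_neg_left, real_inner_comm]
      rw [he, norm_sub_sq_real, norm_smul, norm_smul, Real.norm_eq_abs, Real.norm_eq_abs,
        abs_of_nonneg hb.1.le, abs_of_nonneg (by linarith [hb.2] : (0:ℝ) ≤ 1 - β n),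
        real_inner_smul_left, real_inner_smul_right, hfe]
      simp only [hs2def]
      ring
    have hcontr2 : s2 (n+1) ≤ ‖y n - p‖^2 := by
      simp only [hs2def]
      exact pow_le_pow_left₀ (norm_nonneg _) (hxy n) 2
    have halg : (1 - (1 - β n^2)) * s2 n
        + (1 - β n^2) * ((2*β n*f n + (1-β n)*‖p‖^2)/(1+β n)) + 0
        = β n^2 * s2 n + 2*β n*(1-β n)*(f n) + (1-β n)^2*‖p‖^2 := by
      have hβne : (1:ℝ) + β n ≠ 0 := ne_of_gt (by linarith [hb.1])
      field_simp
      ring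
    rw [halg, ← hyexp]
    exact hcontr2
  have hs2lim : Tendsto s2 atTop (𝓝 0) := by
    refine xu_lemma s2 (fun n => 1 - β n^2)
      (fun n => (2*β n*f n + (1-β n)*‖p‖^2)/(1+β n)) (fun _ => 0)
      (fun n => by simp only [hs2def]; positivity)
      (fun n => by
        show (0:ℝ) ≤ 1 - β n^2
        nlinarith [(hβ n).1, (hβ n).2])
      (fun n => by
        show 1 - β n^2 ≤ 1
        nlinarith [(hβ n).1])
      ?_ ?_ (fun n => le_rfl) summable_zero hrec2
    · intro hsum
      apply hβdiv
      refine Summable.of_nonneg_of_le (fun n => by linarith [(hβ n).2]) (fun n => ?_) hsum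
      nlinarith [(hβ n).1, (hβ n).2]
    · intro η hη
      have h1 := hkey (η/4) (by linarith)
      have h2 : ∀ᶠ n in atTop, (1 - β n) * ‖p‖^2 < η/2 := by
        have h := h1β.mul_const (‖p‖^2)
        simp only [zero_mul] at h
        exact h.eventually (eventually_lt_nhds (by linarith))
      filter_upwards [h1, h2] with n hn1 hn2
      have hb := hβ n
      rw [div_le_iff₀ (by linarith [hb.1] : (0:ℝ) < 1 + β n)]
      rcases le_or_gt (f n) 0 with hf | hf
      · nlinarith
      · nlinarith
  have hnorm0 : Tendsto (fun n => ‖x n - p‖) atTop (𝓝 0) := by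
    have h : Tendsto (fun n => Real.sqrt (s2 n)) atTop (𝓝 (Real.sqrt 0)) :=
      (Real.continuous_sqrt.tendsto _).comp hs2lim
    rw [Real.sqrt_zero] at h
    refine h.congr fun n => ?_
    simp only [hs2def]
    exact Real.sqrt_sq (norm_nonneg _)
  rw [tendsto_iff_norm_sub_tendsto_zero]
  exact hnorm0

end AuxiliaryLemmas

/-- Strong convergence of the modified Krasnosel'skii–Mann iteration for an
`α`-averaged operator `R` (with `0 < λ n ≤ 1/α`) to the minimal norm fixed
point of `R`, i.e. the projection of `0` onto `Fix R`. -/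
theorem modKM_averaged_strong_convergence
    {H : Type*} [NormedAddCommGroup H] [InnerProductSpace ℝ H] [CompleteSpace H]
    (α : ℝ) (hα : α ∈ Set.Ioo (0 : ℝ) 1)
    (R : H → H) (hR : IsAveraged α R)
    (hfix_ne : {z : H | R z = z}.Nonempty)
    (β lam : ℕ → ℝ)
    (hβ : ∀ n, 0 < β n ∧ β n ≤ 1)
    (hβlim : Tendsto β atTop (nhds 1))
    (hβdiv : ¬ Summable (fun n => 1 - β n))
    (hβvar : Summable (fun n => |β (n + 1) - β n|))
    (hlam : ∀ n, 0 < lam n ∧ lam n ≤ 1 / α)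
    (hlaminf : 0 < Filter.liminf lam Filter.atTop)
    (hlamvar : Summable (fun n => |lam (n + 1) - lam n|))
    (x : ℕ → H)
    (hiter : ∀ n, x (n + 1) = β n • x n + lam n • (R (β n • x n) - β n • x n))
    (p : H) (hp : R p = p) (hpmin : ∀ q : H, R q = q → ‖p‖ ≤ ‖q‖) :
    Tendsto x atTop (nhds p) := by
  obtain ⟨T, hT, hRT⟩ := hR
  obtain ⟨hα0, hα1⟩ := hα
  have hfixiff : ∀ z : H, R z = z ↔ T z = z := by
    intro z
    constructor
    · intro h
      rw [hRT z] at h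
      have h3 : α • T z - α • z = ((1 - α) • z + α • T z) - z := by module
      rw [h, sub_self] at h3
      have h4 : α • T z = α • z := sub_eq_zero.mp h3
      exact smul_right_injective H (ne_of_gt hα0) h4
    · intro h
      rw [hRT z, h]
      module
  have hx1 : ∀ n, x (n + 1) = (1 - α * lam n) • (β n • x n) + (α * lam n) • T (β n • x n) := by
    intro n
    rw [hiter n, hRT (β n • x n)]
    module
  exact KM_core α ⟨hα0, hα1⟩ T hT β lam hβ hβlim hβdiv hβvar hlam hlaminf hlamvar x hx1 p
    ((hfixiff p).mp hp) (fun q hq => hpmin q ((hfixiff q).mpr hq))
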